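/- arXiv:2602.15311 — 2 statements merged into one kernel-verified Lean document; each statement's English description precedes it below -/
import Mathlib

section
/- New MUS created at the right end when the longest repeating suffix does not grow: let T = T[1..n] with n ≥ 2, and let ℓ₁ = LRS[n] (the length of the longest repeating suffix of T[1..n]) and ℓ₀ = LRS[n−1] (the length of the longest repeating suffix of T[1..n−1]). If ℓ₁ ≤ ℓ₀, then the interval [n − ℓ₁ .. n] belongs to MUS(T[1..n]). -/
variable {α : Type*}

/-- `occursAt T S p`: the string `S` occurs at the 1-based position `p` in `T`,
i.e. `1 ≤ p ≤ |T| − |S| + 1` and `T[p..p+|S|−1] = S`. -/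
def occursAt (T S : List α) (p : ℕ) : Prop :=
  1 ≤ p ∧ p + S.length ≤ T.length + 1 ∧ (T.drop (p - 1)).take S.length = S

/-- `#occ_T(S)`: the number of positions at which `S` occurs in `T`. -/
noncomputable def occCount (T S : List α) : ℕ :=
  {p : ℕ | occursAt T S p}.ncard

/-- `sub T i ℓ = T[i..i+ℓ−1]` (1-based substring of length `ℓ` starting at `i`). -/
def sub (T : List α) (i ℓ : ℕ) : List α := (T.drop (i - 1)).take ℓ

/-- Longest previous factor array (1-based): `LPF T i` is the largest `ℓ ≥ 0` such that
the prefix `T[i..i+ℓ−1]` of `T[i..n]` also occurs at some position `j < i` in `T`. -/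
noncomputable def LPF (T : List α) (i : ℕ) : ℕ :=
  @Nat.findGreatest
    (fun ℓ => (i - 1) + ℓ ≤ T.length ∧ ∃ j, 1 ≤ j ∧ j < i ∧ occursAt T (sub T i ℓ) j)
    (Classical.decPred _) T.length

/-- Longest repeating suffix array (1-based): `LRS T i` is the length of the longest
suffix of `T[1..i]` occurring at least twice in `T[1..i]`. -/
noncomputable def LRS (T : List α) (i : ℕ) : ℕ :=
  @Nat.findGreatest
    (fun ℓ => 2 ≤ occCount (T.take i) ((T.take i).drop (i - ℓ)))
    (Classical.decPred _) i

/-- `MUS T`: the set of (1-based) intervals `[s..t] ⊆ [1..n]` such that `T[s..t]` is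
unique in `T` while `T[s+1..t]` and `T[s..t−1]` are repeating in `T`. -/
def MUS (T : List α) : Set (ℕ × ℕ) :=
  {st | 1 ≤ st.1 ∧ st.1 ≤ st.2 ∧ st.2 ≤ T.length ∧
    occCount T (sub T st.1 (st.2 - st.1 + 1)) = 1 ∧
    2 ≤ occCount T (sub T (st.1 + 1) (st.2 - st.1)) ∧
    2 ≤ occCount T (sub T st.1 (st.2 - st.1))}


lemma occ_finite (T S : List α) : {p | occursAt T S p}.Finite :=
  (Set.finite_Icc 1 (T.length + 1)).subset (by
    rintro p ⟨h1, h2, -⟩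
    exact ⟨h1, by omega⟩)

lemma two_le_occCount {T S : List α} {p q : ℕ} (hp : occursAt T S p) (hq : occursAt T S q)
    (hpq : p ≠ q) : 2 ≤ occCount T S := by
  have := (Set.one_lt_ncard_iff (occ_finite T S)).2 ⟨p, q, hp, hq, hpq⟩
  exact this

lemma occCount_eq_one_of {T S : List α} {p : ℕ} (hp : occursAt T S p)
    (h2 : ¬ 2 ≤ occCount T S) : occCount T S = 1 := by
  have h1 : 0 < occCount T S := (Set.ncard_pos (occ_finite T S)).2 ⟨p, hp⟩
  omega

lemma occursAt_append {T A B : List α} {p : ℕ} (h : occursAt T (A ++ B) p) :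
    occursAt T B (p + A.length) := by
  obtain ⟨h1, h2, h3⟩ := h
  simp only [List.length_append] at h2 h3
  refine ⟨by omega, by omega, ?_⟩
  have h4 := congrArg (List.drop A.length) h3
  rw [List.drop_take, List.drop_drop, List.drop_left] at h4
  have e1 : A.length + B.length - A.length = B.length := by omega
  have e2 : p - 1 + A.length = p + A.length - 1 := by omega
  rw [e1, e2] at h4
  exact h4

lemma occursAt_of_take {T S : List α} {m p : ℕ} (h : occursAt (T.take m) S p) :
    occursAt T S p := by
  obtain ⟨h1, h2, h3⟩ := h
  rw [List.length_take] at h2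
  have hmn : min m T.length ≤ m := Nat.min_le_left _ _
  refine ⟨h1, by omega, ?_⟩
  rw [List.drop_take, List.take_take, min_eq_left (by omega)] at h3
  exact h3

lemma occursAt_suffix (T : List α) {ℓ : ℕ} (hl : ℓ ≤ T.length) :
    occursAt T (T.drop (T.length - ℓ)) (T.length - ℓ + 1) := by
  refine ⟨by omega, ?_, ?_⟩
  · rw [List.length_drop]; omega
  · simp only [Nat.add_sub_cancel]
    rw [List.take_of_length_le (by rw [List.length_drop])]

lemma occCount_nil_two_le (T : List α) (hn : 1 ≤ T.length) :
    2 ≤ occCount T ([] : List α) := by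
  refine two_le_occCount (p := 1) (q := 2) ?_ ?_ (by omega)
  · exact ⟨le_refl _, by simp only [List.length_nil]; omega, by simp⟩
  · exact ⟨by omega, by simp only [List.length_nil]; omega, by simp⟩

lemma occCount_self_le_one (T : List α) : occCount T T ≤ 1 := by
  have hsub : {p | occursAt T T p} ⊆ {1} := by
    rintro p ⟨h1, h2, -⟩
    simp only [Set.mem_singleton_iff]
    omega
  calc occCount T T ≤ ({1} : Set ℕ).ncard :=
        Set.ncard_le_ncard hsub (Set.finite_singleton 1)
    _ = 1 := Set.ncard_singleton 1

lemma LRS_spec (T : List α) (i : ℕ) (h0 : LRS T i ≠ 0) :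
    2 ≤ occCount (T.take i) ((T.take i).drop (i - LRS T i)) := by
  have := @Nat.findGreatest_of_ne_zero (LRS T i)
    (fun ℓ => 2 ≤ occCount (T.take i) ((T.take i).drop (i - ℓ)))
    (Classical.decPred _) i rfl h0
  exact this

lemma LRS_le (T : List α) (i : ℕ) : LRS T i ≤ i :=
  @Nat.findGreatest_le (fun ℓ => 2 ≤ occCount (T.take i) ((T.take i).drop (i - ℓ)))
    (Classical.decPred _) i

lemma LRS_not (T : List α) {i k : ℕ} (hk : LRS T i < k) (hki : k ≤ i) :
    ¬ 2 ≤ occCount (T.take i) ((T.take i).drop (i - k)) :=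
  @Nat.findGreatest_is_greatest k
    (fun ℓ => 2 ≤ occCount (T.take i) ((T.take i).drop (i - ℓ)))
    (Classical.decPred _) i hk hki

/-- new MUS created at the right end when the longest repeating suffix does
not grow: for `n ≥ 2`, with `ℓ₁ = LRS[n]` and `ℓ₀ = LRS[n−1]`, if `ℓ₁ ≤ ℓ₀` then
`[n − ℓ₁ .. n] ∈ MUS(T[1..n])`. -/
theorem new_mus_at_right_end (T : List α) (hn : 2 ≤ T.length)
    (h : LRS T T.length ≤ LRS T (T.length - 1)) :
    (T.length - LRS T T.length, T.length) ∈ MUS T := by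
  classical
  set n := T.length with hn'
  have htake : T.take n = T := List.take_length
  have hl1P : LRS T n ≠ 0 → 2 ≤ occCount T (T.drop (n - LRS T n)) := by
    intro h0
    have := LRS_spec T n h0
    rwa [htake] at this
  have hl1n : LRS T n ≤ n := LRS_le T n
  set ℓ₁ := LRS T n with hℓ₁
  set ℓ₀ := LRS T (n - 1) with hℓ₀
  -- ℓ₁ < n
  have hfull : ¬ 2 ≤ occCount T (T.drop (n - n)) := by
    simp only [Nat.sub_self, List.drop_zero]
    have := occCount_self_le_one T
    omega
  have hℓ₁lt : ℓ₁ < n := by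
    rcases lt_or_eq_of_le hl1n with h' | h'
    · exact h'
    · exfalso
      apply hfull
      have h2 := hl1P (by omega)
      rw [h'] at h2
      exact h2
  have hℓ₀n : ℓ₀ ≤ n - 1 := LRS_le T (n - 1)
  -- the suffix of length ℓ₁ + 1 is not repeating
  have hnotrep : ¬ 2 ≤ occCount T (T.drop (n - (ℓ₁ + 1))) := by
    have := LRS_not T (i := n) (k := ℓ₁ + 1) (by omega) (by omega)
    rwa [htake] at this
  -- condition 4 : uniqueness
  have hsub1 : sub T (n - ℓ₁) (n - (n - ℓ₁) + 1) = T.drop (n - (ℓ₁ + 1)) := by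
    rw [sub]
    have e1 : n - ℓ₁ - 1 = n - (ℓ₁ + 1) := by omega
    have e2 : n - (n - ℓ₁) + 1 = ℓ₁ + 1 := by omega
    rw [e1, e2]
    exact List.take_of_length_le (by rw [List.length_drop]; omega)
  have hocc1 : occursAt T (T.drop (n - (ℓ₁ + 1))) (n - (ℓ₁ + 1) + 1) :=
    occursAt_suffix T (by omega)
  have huniq : occCount T (sub T (n - ℓ₁) (n - (n - ℓ₁) + 1)) = 1 := by
    rw [hsub1]
    exact occCount_eq_one_of hocc1 hnotrep
  -- condition 5 : right inner substring repeating
  have hsub2 : sub T (n - ℓ₁ + 1) (n - (n - ℓ₁)) = T.drop (n - ℓ₁) := by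
    rw [sub]
    have e1 : n - ℓ₁ + 1 - 1 = n - ℓ₁ := by omega
    have e2 : n - (n - ℓ₁) = ℓ₁ := by omega
    rw [e1, e2]
    exact List.take_of_length_le (by rw [List.length_drop]; omega)
  have hrep1 : 2 ≤ occCount T (sub T (n - ℓ₁ + 1) (n - (n - ℓ₁))) := by
    rw [hsub2]
    rcases Nat.eq_zero_or_pos ℓ₁ with h0 | h0
    · rw [h0]
      have hd : T.drop (n - 0) = ([] : List α) := List.drop_eq_nil_of_le (by omega)
      rw [hd]
      exact occCount_nil_two_le T (by omega)
    · exact hl1P (by omega)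
  -- condition 6 : left inner substring repeating
  have hsub3 : sub T (n - ℓ₁) (n - (n - ℓ₁)) =
      ((T.take (n - 1)).drop ((n - 1) - ℓ₁)) := by
    rw [sub, List.drop_take]
    have e1 : n - ℓ₁ - 1 = n - 1 - ℓ₁ := by omega
    have e2 : n - 1 - (n - 1 - ℓ₁) = ℓ₁ := by omega
    have e3 : n - (n - ℓ₁) = ℓ₁ := by omega
    rw [e1, e2, e3]
  have hrep2 : 2 ≤ occCount T (sub T (n - ℓ₁) (n - (n - ℓ₁))) := by
    rw [hsub3]
    rcases Nat.eq_zero_or_pos ℓ₀ with h0 | h0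
    · have h1 : ℓ₁ = 0 := by omega
      rw [h1]
      have : (T.take (n - 1)).drop (n - 1 - 0) = ([] : List α) := by
        apply List.drop_eq_nil_of_le
        rw [List.length_take]
        omega
      rw [this]
      exact occCount_nil_two_le T (by omega)
    · -- ℓ₀ > 0 : P'(ℓ₀) holds for T.take (n-1)
      have hP0 : 2 ≤ occCount (T.take (n - 1)) ((T.take (n - 1)).drop ((n - 1) - ℓ₀)) :=
        LRS_spec T (n - 1) (by omega)
      obtain ⟨p, q, hp, hq, hpq⟩ := (Set.one_lt_ncard_iff (occ_finite _ _)).1 (by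
        exact lt_of_lt_of_le one_lt_two hP0)
      -- split the ℓ₀-suffix as A ++ B with B the ℓ₁-suffix
      set U := T.take (n - 1) with hU
      have hUlen : U.length = n - 1 := by
        rw [hU, List.length_take]; omega
      have hsplit : U.drop ((n - 1) - ℓ₀) =
          (U.drop ((n - 1) - ℓ₀)).take (ℓ₀ - ℓ₁) ++ U.drop ((n - 1) - ℓ₁) := by
        have : U.drop ((n - 1) - ℓ₁) = (U.drop ((n - 1) - ℓ₀)).drop (ℓ₀ - ℓ₁) := by
          rw [List.drop_drop]
          congr 1
          omega
        rw [this, List.take_append_drop]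
      have hAlen : ((U.drop ((n - 1) - ℓ₀)).take (ℓ₀ - ℓ₁)).length = ℓ₀ - ℓ₁ := by
        rw [List.length_take, List.length_drop, hUlen]
        omega
      rw [hsplit] at hp hq
      have hp' := occursAt_append hp
      have hq' := occursAt_append hq
      rw [hAlen] at hp' hq'
      exact two_le_occCount (occursAt_of_take hp') (occursAt_of_take hq') (by omega)
  exact ⟨by simp only; omega, by simp only; omega, by simp only; omega, huniq, hrep1, hrep2⟩
end

section
/- Left extension of the earlier copy of the longest repeating suffix is unique: let W = W[1..n], let L be the longest repeating suffix of W, and assume L is nonempty, #occ_W(L) = 2, and the non-suffix occurrence of L is W[ℓ..q] = L with q ≤ n − 1 and ℓ ≥ 2. Then the string W[ℓ−1..q] is unique in W, i.e., #occ_W(W[ℓ−1..q]) = 1. -/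
variable {α : Type*}

lemma occSet_finite (T S : List α) : {p : ℕ | occursAt T S p}.Finite := by
  apply Set.Finite.subset (Set.finite_Iic (T.length + 1))
  rintro p ⟨h1, h2, -⟩
  simp only [Set.mem_Iic]
  omega

/-- left extension of the earlier copy of the longest repeating suffix is
unique: if the longest repeating suffix `L` of `W` (of length `LRS[n]`) is nonempty,
`#occ_W(L) = 2`, and its non-suffix occurrence is `W[ℓ..q] = L` with
`q = ℓ + |L| − 1 ≤ n − 1` and `ℓ ≥ 2`, then `W[ℓ−1..q]` is unique in `W`. -/
theorem left_extension_unique (W : List α) (ℓ : ℕ)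
    (hL : 1 ≤ LRS W W.length)
    (h2 : occCount W (W.drop (W.length - LRS W W.length)) = 2)
    (hocc : occursAt W (W.drop (W.length - LRS W W.length)) ℓ)
    (hq : ℓ + LRS W W.length ≤ W.length) (hℓ : 2 ≤ ℓ) :
    occCount W (sub W (ℓ - 1) (LRS W W.length + 1)) = 1 := by
  set n := W.length with hn
  set m := LRS W n with hm
  have hmn : m ≤ n :=
    @Nat.findGreatest_le (fun k => 2 ≤ occCount (W.take n) ((W.take n).drop (n - k)))
      (Classical.decPred _) n
  set L := W.drop (n - m) with hLdef
  have hLlen : L.length = m := by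
    rw [hLdef, List.length_drop]; omega
  set S := sub W (ℓ - 1) (m + 1) with hSdef
  have hSeq : S = (W.drop (ℓ - 2)).take (m + 1) := by
    have h12 : ℓ - 1 - 1 = ℓ - 2 := by omega
    simp only [hSdef, sub, h12]
  have hSlen : S.length = m + 1 := by
    rw [hSeq, List.length_take, List.length_drop]
    omega
  -- occurrences of L
  have hLsuff : occursAt W L (n - m + 1) := by
    refine ⟨by omega, by rw [hLlen]; omega, ?_⟩
    have : n - m + 1 - 1 = n - m := by omega
    rw [this, hLlen, ← hLdef, List.take_of_length_le (le_of_eq hLlen)]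
  have hℓne : ℓ ≠ n - m + 1 := by omega
  -- the set of occurrences of L is exactly {ℓ, n - m + 1}
  obtain ⟨a, b, hab, hset⟩ := Set.ncard_eq_two.mp h2
  have hmemL : ∀ p, occursAt W L p → p = ℓ ∨ p = n - m + 1 := by
    intro p hp
    have hpmem : p ∈ ({a, b} : Set ℕ) := hset ▸ hp
    have hℓmem : ℓ ∈ ({a, b} : Set ℕ) := hset ▸ hocc
    have hsmem : (n - m + 1) ∈ ({a, b} : Set ℕ) := hset ▸ hLsuff
    simp only [Set.mem_insert_iff, Set.mem_singleton_iff] at hpmem hℓmem hsmem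
    rcases hℓmem with h | h <;> rcases hsmem with h' | h' <;> omega
  -- occurrence of S at ℓ - 1
  have hSocc : occursAt W S (ℓ - 1) := by
    refine ⟨by omega, by rw [hSlen]; omega, ?_⟩
    have h12 : ℓ - 1 - 1 = ℓ - 2 := by omega
    rw [hSlen, h12, ← hSeq]
  -- any occurrence of S is at ℓ - 1
  have hkey : ∀ p, occursAt W S p → p = ℓ - 1 := by
    rintro p ⟨hp1, hp2, hp3⟩
    rw [hSlen] at hp2 hp3
    -- L occurs at p + 1
    have htail : (W.drop p).take m = L := by
      have := congrArg (List.drop 1) hp3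
      rw [List.drop_take, List.drop_drop] at this
      have h1 : p - 1 + 1 = p := by omega
      rw [h1] at this
      have hR : S.drop 1 = L := by
        rw [hSeq, List.drop_take, List.drop_drop]
        have h2 : ℓ - 2 + 1 = ℓ - 1 := by omega
        rw [h2]
        have := hocc.2.2
        rw [hLlen] at this
        simpa using this
      simpa using this.trans hR
    have hLp : occursAt W L (p + 1) :=
      ⟨by omega, by rw [hLlen]; omega, by simpa [hLlen] using htail⟩
    rcases hmemL _ hLp with h | h
    · omega
    · -- p = n - m : then S is a suffix of W of length m+1 occurring twice, contradiction
      exfalso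
      have hpval : p = n - m := by omega
      have hSsuff : W.drop (n - (m + 1)) = S := by
        have hlen : (W.drop (n - (m + 1))).length = m + 1 := by
          rw [List.length_drop]; omega
        have : (W.drop (n - (m + 1))).take (m + 1) = S := by
          have : p - 1 = n - (m + 1) := by omega
          rw [← this]; exact hp3
        rw [← this, List.take_of_length_le (le_of_eq hlen)]
      have hocc2 : 2 ≤ occCount W (W.drop (n - (m + 1))) := by
        rw [occCount]
        show 1 < _
        rw [Set.one_lt_ncard_iff (occSet_finite W _)]
        refine ⟨ℓ - 1, p, ?_, ?_, by omega⟩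
        · simpa [hSsuff] using hSocc
        · simp only [Set.mem_setOf_eq, hSsuff]
          exact ⟨hp1, by rw [hSlen]; omega, by rw [hSlen]; exact hp3⟩
      have hWtake : W.take n = W := by simp [hn]
      have hP : 2 ≤ occCount (W.take n) ((W.take n).drop (n - (m + 1))) := by
        rw [hWtake]; exact hocc2
      have := @Nat.le_findGreatest (m + 1)
        (fun k => 2 ≤ occCount (W.take n) ((W.take n).drop (n - k)))
        (Classical.decPred _) n (by omega) hP
      have h3 : m + 1 ≤ LRS W n := this
      omega
  rw [occCount, Set.ncard_eq_one]
  exact ⟨ℓ - 1, Set.eq_singleton_iff_unique_mem.mpr ⟨hSocc, hkey⟩⟩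
end
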